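/- Let X be a λ-star set of a graph G with adjacency matrix in block form [[A_X, Nᵀ],[N, C]]. Then the eigenspace of A_G for λ is exactly the set of vectors of the form (y, −(C − λI)⁻¹ N y) for y ∈ ℝ^{|X|}. -/

import Mathlib

open Matrix

noncomputable def eigSpace {m : Type*} [Fintype m] [DecidableEq m]
    (A : Matrix m m ℝ) (lam : ℝ) : Submodule ℝ (m → ℝ) :=
  LinearMap.ker (Matrix.mulVecLin (A - lam • (1 : Matrix m m ℝ)))

/-- `lam` is an eigenvalue of the real matrix `A`. -/
def IsEig {m : Type*} [Fintype m] [DecidableEq m] (A : Matrix m m ℝ) (lam : ℝ) : Prop :=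
  eigSpace A lam ≠ ⊥

/-- The multiplicity of `lam` as an eigenvalue of `A`. -/
noncomputable def multE {m : Type*} [Fintype m] [DecidableEq m]
    (A : Matrix m m ℝ) (lam : ℝ) : ℕ :=
  Module.finrank ℝ (eigSpace A lam)

/-- `lam` is a main eigenvalue of `A`: its eigenspace is not orthogonal to the all-ones
vector. -/
def IsMainEig {m : Type*} [Fintype m] [DecidableEq m] (A : Matrix m m ℝ) (lam : ℝ) : Prop :=
  ∃ x ∈ eigSpace A lam, ∑ i, x i ≠ 0

/-- The adjacency matrix of the subgraph of `G` induced by the vertex set `S`. -/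
def indMatrix {n : ℕ} (G : SimpleGraph (Fin n)) [DecidableRel G.Adj] (S : Finset (Fin n)) :
    Matrix S S ℝ :=
  (G.adjMatrix ℝ).submatrix (fun i => (i : Fin n)) (fun j => (j : Fin n))

/-- `X` is a `lam`-star set of `G`: its cardinality equals the multiplicity of `lam`
and `lam` is not an eigenvalue of the subgraph induced by the complement of `X`. -/
def IsStarSet {n : ℕ} (G : SimpleGraph (Fin n)) [DecidableRel G.Adj] (lam : ℝ)
    (X : Finset (Fin n)) : Prop :=
  X.card = multE (G.adjMatrix ℝ) lam ∧ ¬ IsEig (indMatrix G Xᶜ) lam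

/-- The block `N` of the adjacency matrix: rows indexed by `Xᶜ`, columns by `X`. -/
def Nmat {n : ℕ} (G : SimpleGraph (Fin n)) [DecidableRel G.Adj] (X : Finset (Fin n)) :
    Matrix ↥(Xᶜ) ↥X ℝ :=
  (G.adjMatrix ℝ).submatrix (fun i => (i : Fin n)) (fun j => (j : Fin n))

/-- The block `C` of the adjacency matrix: the adjacency matrix of `G - X`. -/
def Cmat {n : ℕ} (G : SimpleGraph (Fin n)) [DecidableRel G.Adj] (X : Finset (Fin n)) :
    Matrix ↥(Xᶜ) ↥(Xᶜ) ℝ :=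
  indMatrix G Xᶜ

lemma isUnit_of_not_isEig {m : Type*} [Fintype m] [DecidableEq m] (A : Matrix m m ℝ) (lam : ℝ)
    (h : ¬ IsEig A lam) : IsUnit (A - lam • 1) := by
  rw [IsEig, not_not, eigSpace, LinearMap.ker_eq_bot] at h
  exact Matrix.mulVec_injective_iff_isUnit.mp (fun a b hab => h hab)

lemma forward_dir {n : ℕ} (G : SimpleGraph (Fin n)) [DecidableRel G.Adj] (lam : ℝ)
    (X : Finset (Fin n)) (hC : ¬ IsEig (indMatrix G Xᶜ) lam) (x : Fin n → ℝ)
    (hx : x ∈ eigSpace (G.adjMatrix ℝ) lam) :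
    (fun i : ↥(Xᶜ) => x (i : Fin n)) =
      -((Cmat G X - lam • 1)⁻¹ *ᵥ (Nmat G X *ᵥ fun j : ↥X => x (j : Fin n))) := by
  have hU : IsUnit (Cmat G X - lam • (1 : Matrix ↥(Xᶜ) ↥(Xᶜ) ℝ)) :=
    isUnit_of_not_isEig _ _ hC
  set xC := fun i : ↥(Xᶜ) => x (i : Fin n) with hxC
  set xX := fun j : ↥X => x (j : Fin n) with hxX
  have hx' : (G.adjMatrix ℝ - lam • 1) *ᵥ x = 0 := hx
  have key : (Cmat G X - lam • 1) *ᵥ xC = -(Nmat G X *ᵥ xX) := by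
    funext i
    have h0 : ((G.adjMatrix ℝ - lam • 1) *ᵥ x) (i : Fin n) = 0 := by rw [hx']; rfl
    rw [Matrix.sub_mulVec, Matrix.smul_mulVec, one_mulVec] at h0 ⊢
    have hsum : ∑ j ∈ X, G.adjMatrix ℝ (i : Fin n) j * x j
        + ∑ j ∈ Xᶜ, G.adjMatrix ℝ (i : Fin n) j * x j
        = ∑ j, G.adjMatrix ℝ (i : Fin n) j * x j :=
      Finset.sum_add_sum_compl X _
    have hC' : ((Cmat G X) *ᵥ xC) i = ∑ j ∈ Xᶜ, G.adjMatrix ℝ (i : Fin n) j * x j := by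
      rw [← Finset.sum_coe_sort (Xᶜ) (fun j => G.adjMatrix ℝ (i : Fin n) j * x j)]
      rfl
    have hN' : ((Nmat G X) *ᵥ xX) i = ∑ j ∈ X, G.adjMatrix ℝ (i : Fin n) j * x j := by
      rw [← Finset.sum_coe_sort X (fun j => G.adjMatrix ℝ (i : Fin n) j * x j)]
      rfl
    have h0' : ∑ j, G.adjMatrix ℝ (i : Fin n) j * x j - lam * x (i : Fin n) = 0 := by
      simpa only [Pi.sub_apply, Pi.smul_apply, smul_eq_mul, Matrix.mulVec, dotProduct] using h0
    simp only [Pi.sub_apply, Pi.neg_apply, Pi.smul_apply, smul_eq_mul, hC', hN']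
    linarith
  have hdet : IsUnit (Cmat G X - lam • (1 : Matrix ↥(Xᶜ) ↥(Xᶜ) ℝ)).det :=
    (Matrix.isUnit_iff_isUnit_det _).mp hU
  calc xC = (Cmat G X - lam • 1)⁻¹ *ᵥ ((Cmat G X - lam • 1) *ᵥ xC) := by
        rw [Matrix.mulVec_mulVec, Matrix.nonsing_inv_mul _ hdet, Matrix.one_mulVec]
    _ = -((Cmat G X - lam • 1)⁻¹ *ᵥ (Nmat G X *ᵥ xX)) := by
        rw [key, Matrix.mulVec_neg]

theorem stmt3 {n : ℕ} (G : SimpleGraph (Fin n)) [DecidableRel G.Adj] (lam : ℝ)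
    (X : Finset (Fin n)) (hX : IsStarSet G lam X) (x : Fin n → ℝ) :
    x ∈ eigSpace (G.adjMatrix ℝ) lam ↔
      (fun i : ↥(Xᶜ) => x (i : Fin n)) =
        -((Cmat G X - lam • 1)⁻¹ *ᵥ (Nmat G X *ᵥ fun j : ↥X => x (j : Fin n))) := by
  obtain ⟨hcard, hC⟩ := hX
  constructor
  · exact forward_dir G lam X hC x
  · intro hx
    -- restriction map from the eigenspace to ℝ^X
    set E := eigSpace (G.adjMatrix ℝ) lam
    let L : E →ₗ[ℝ] (↥X → ℝ) :=
      { toFun := fun v => fun j : ↥X => v.1 (j : Fin n)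
        map_add' := fun u v => rfl
        map_smul' := fun c v => rfl }
    have hinj : Function.Injective L := by
      rw [← LinearMap.ker_eq_bot]
      rw [Submodule.eq_bot_iff]
      rintro ⟨v, hv⟩ hLv
      have hvX : (fun j : ↥X => v (j : Fin n)) = 0 := hLv
      have hvC := forward_dir G lam X hC v hv
      rw [hvX] at hvC
      simp only [Matrix.mulVec_zero, neg_zero] at hvC
      ext i
      by_cases hi : i ∈ X
      · exact congrFun hvX ⟨i, hi⟩
      · exact congrFun hvC ⟨i, Finset.mem_compl.mpr hi⟩
    have hrank : Module.finrank ℝ E = Module.finrank ℝ (↥X → ℝ) := by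
      rw [Module.finrank_pi, Fintype.card_coe]
      exact (hcard).symm
    have hsurj : Function.Surjective L :=
      (LinearMap.injective_iff_surjective_of_finrank_eq_finrank hrank).mp hinj
    obtain ⟨v, hv⟩ := hsurj (fun j : ↥X => x (j : Fin n))
    have hvC := forward_dir G lam X hC v.1 v.2
    have hvX : (fun j : ↥X => v.1 (j : Fin n)) = fun j : ↥X => x (j : Fin n) := hv
    have hxw : x = v.1 := by
      ext i
      by_cases hi : i ∈ X
      · exact (congrFun hvX ⟨i, hi⟩).symm
      · have h1 := congrFun hx ⟨i, Finset.mem_compl.mpr hi⟩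
        have h2 := congrFun hvC ⟨i, Finset.mem_compl.mpr hi⟩
        rw [hvX] at h2
        rw [h1, h2]
    rw [hxw]
    exact v.2
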